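/- With g defined by the recurrence g(0,k,u) = 1, g(q,k,0) = 1, and g(q,k,u+1) = g(q,k,u) + ((1−α^q)/α^q)·g(q−1,k,u) where α = k/(k+1), we have for all u ≥ 0: g(2,k,u) = (k³ + 2k²u + ku² + u(u−1)/2)/k³. -/

import Mathlib

/-- With `α = k/(k+1)` and `g` satisfying the recurrence
`g q k (u+1) = g q k u + ((1−α^q)/α^q)·g (q−1) k u` with base cases
`g 0 k u = 1` and `g q k 0 = 1`, we have
`g 2 k u = (k³ + 2k²u + ku² + u(u−1)/2)/k³` for all `u`. -/
theorem stmt14 (k : ℕ) (hk : 1 ≤ k) (g : ℕ → ℕ → ℕ → ℝ)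
    (α : ℝ) (hα : α = (k : ℝ) / (k + 1))
    (hg0 : ∀ u, g 0 k u = 1)
    (hgq0 : ∀ q, g q k 0 = 1)
    (hrec : ∀ q u, 1 ≤ q →
      g q k (u + 1) = g q k u + ((1 - α ^ q) / α ^ q) * g (q - 1) k u) :
    ∀ u : ℕ, g 2 k u =
      ((k : ℝ) ^ 3 + 2 * k ^ 2 * u + k * u ^ 2 + u * (u - 1) / 2) / k ^ 3 := by
  have hk0 : (k : ℝ) ≠ 0 := Nat.cast_ne_zero.mpr (by omega)
  have hk1 : (k : ℝ) + 1 ≠ 0 := by positivity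
  have hc : (1 - α ^ 1) / α ^ 1 = 1 / k := by
    rw [hα]; field_simp; ring
  have hc2 : (1 - α ^ 2) / α ^ 2 = (2 * k + 1) / k ^ 2 := by
    rw [hα, div_pow]
    rw [div_eq_div_iff (by positivity) (by positivity), one_sub_div (by positivity)]
    field_simp
    ring
  have h1 : ∀ u : ℕ, g 1 k u = 1 + u / k := by
    intro u
    induction u with
    | zero => simp [hgq0]
    | succ n ih =>
      rw [hrec 1 n le_rfl, ih, hc, hg0]
      push_cast
      field_simp
      ring
  intro u
  induction u with
  | zero => simp [hgq0]; field_simp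
  | succ n ih =>
    rw [hrec 2 n (by norm_num), ih, hc2]
    show _ + _ * g 1 k n = _
    rw [h1]
    push_cast
    field_simp
    ring
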